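/- For every positive integer d and every nonnegative integer n, a_d(n) equals the number of partitions of n + T_d into exactly d parts whose Durfee triangle has size d. -/

import Mathlib

/-- `triangleFits s k`: the right-angled isosceles triangle of size `k` fits into the
Ferrers board of the partition with parts `s`, i.e. the `j`-th largest part is
`> k - j` (equivalently `≥ k - j + 1`) for all `j ∈ {1, …, k}`. -/
def triangleFits (s : Multiset ℕ) (k : ℕ) : Prop :=
  ∀ j ∈ Finset.Icc 1 k, j ≤ Multiset.card (s.filter fun x => k + 1 - j ≤ x)

instance (s : Multiset ℕ) : DecidablePred (triangleFits s) := fun k => by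
  unfold triangleFits; infer_instance

/-- The size of the Durfee triangle: the largest `k` such that the triangle of size `k` fits. -/
def durfeeTriangleSize (s : Multiset ℕ) : ℕ :=
  Nat.findGreatest (triangleFits s) (Multiset.card s)

/-- `R k n`: the number of partitions of `n` whose Durfee triangle has size `k`. -/
def R (k n : ℕ) : ℕ :=
  Finset.card (Finset.univ.filter fun p : Nat.Partition n => durfeeTriangleSize p.parts = k)
/-- `a d n`: the number of tuples `(k₁, …, k_d)` of nonnegative integers summing to `n`
with `k_{j} ≤ k_{j-1} + 1` for `j ∈ {2, …, d}`. -/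
def a (d n : ℕ) : ℕ :=
  Finset.card ((Finset.univ : Finset (Fin d → Fin (n + 1))).filter fun t =>
    (∑ i, (t i : ℕ)) = n ∧
    ∀ i : Fin d, ∀ h : i.val + 1 < d, (t ⟨i.val + 1, h⟩ : ℕ) ≤ (t i : ℕ) + 1)

lemma aux_sum_ind (d j : ℕ) : (∑ i ∈ Finset.range d, if i < j then 1 else 0) = min j d := by
  induction d with
  | zero => simp
  | succ d ih => rw [Finset.sum_range_succ, ih]; split_ifs <;> omega

lemma aux_card_lt (d j : ℕ) : (Finset.univ.filter fun i : Fin d => (i : ℕ) < j).card = min j d := by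
  rw [Finset.card_filter, Fin.sum_univ_eq_sum_range (fun i => if i < j then 1 else 0), aux_sum_ind]

lemma aux_filter_ofFn (d : ℕ) (g : Fin d → ℕ) (p : ℕ → Prop) [DecidablePred p] :
    Multiset.card (Multiset.filter p ↑(List.ofFn g)) = (Finset.univ.filter fun i => p (g i)).card := by
  rw [List.ofFn_eq_map, ← Multiset.map_coe, Multiset.filter_map, Multiset.card_map]
  rfl

lemma aux_gauss (d : ℕ) : (∑ i ∈ Finset.range d, (d - i)) = d * (d + 1) / 2 := by
  rw [← Finset.sum_range_reflect]
  have h1 : ∀ j ∈ Finset.range d, d - (d - 1 - j) = j + 1 := by intro j hj; simp at hj; omega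
  rw [Finset.sum_congr rfl h1]
  have h2 := Finset.sum_range_succ' (fun i => i) d
  simp only [Nat.add_zero] at h2
  rw [← h2, Finset.sum_range_id]
  simp [Nat.mul_comm]

lemma aux_sum_getD (l : List ℕ) : l.sum = ∑ i ∈ Finset.range l.length, l.getD i 0 := by
  induction l with
  | nil => simp
  | cons b l ih =>
    rw [List.sum_cons, ih, List.length_cons, Finset.sum_range_succ']
    simp [List.getD_cons_succ, List.getD_cons_zero, Nat.add_comm]

lemma triangleFits_ofFn (d : ℕ) (g : Fin d → ℕ) (hg : ∀ i : Fin d, d - (i : ℕ) ≤ g i) :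
    triangleFits ↑(List.ofFn g) d := by
  intro j hj
  rw [Finset.mem_Icc] at hj
  rw [aux_filter_ofFn]
  calc j = min j d := by omega
    _ = (Finset.univ.filter fun i : Fin d => (i : ℕ) < j).card := (aux_card_lt d j).symm
    _ ≤ _ := by
        apply Finset.card_le_card
        intro i hi
        simp only [Finset.mem_filter, Finset.mem_univ, true_and] at hi ⊢
        have := hg i
        omega

lemma get_ge_of_sorted : ∀ (l : List ℕ), l.Pairwise (· ≥ ·) → ∀ (k : ℕ), k < l.length → ∀ (v : ℕ),
    k + 1 ≤ Multiset.card (Multiset.filter (fun x => v ≤ x) ↑l) → v ≤ l.getD k 0 := by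
  intro l
  induction l with
  | nil => intro _ k hk; simp at hk
  | cons b l ih =>
    intro hs k hk v hcount
    have hs' : l.Pairwise (· ≥ ·) := hs.of_cons
    have hrel : ∀ x ∈ l, x ≤ b := fun x hx => List.rel_of_pairwise_cons hs hx
    have hfc : Multiset.filter (fun x => v ≤ x) ↑(b :: l) =
        (if v ≤ b then {b} else 0) + Multiset.filter (fun x => v ≤ x) ↑l := by
      rw [← Multiset.cons_coe, Multiset.filter_cons]
    cases k with
    | zero =>
      rw [List.getD_cons_zero]
      by_contra hv
      push_neg at hv
      have hnil : Multiset.filter (fun x => v ≤ x) ↑l = 0 := by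
        rw [Multiset.filter_eq_nil]
        intro x hx
        have := hrel x (by exact_mod_cast hx)
        omega
      rw [hfc, if_neg (by omega), hnil] at hcount
      simp at hcount
    | succ k =>
      have h2 : k + 1 ≤ Multiset.card (Multiset.filter (fun x => v ≤ x) ↑l) := by
        rw [hfc, Multiset.card_add] at hcount
        split_ifs at hcount <;> simp only [Multiset.card_singleton, Multiset.card_zero] at hcount <;> omega
      rw [List.getD_cons_succ]
      exact ih hs' k (by simpa using hk) v h2

lemma durfee_eq_iff (s : Multiset ℕ) (d : ℕ) (hcard : Multiset.card s = d) :
    durfeeTriangleSize s = d ↔ triangleFits s d := by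
  constructor
  · intro h
    have h0 : triangleFits s 0 := by intro j hj; simp at hj
    have := Nat.findGreatest_spec (P := triangleFits s) (m := 0) (Nat.zero_le (Multiset.card s)) h0
    rwa [show Nat.findGreatest (triangleFits s) (Multiset.card s) = durfeeTriangleSize s from rfl,
      h] at this
  · intro h
    unfold durfeeTriangleSize
    apply le_antisymm
    · rw [hcard]; exact Nat.findGreatest_le _
    · exact Nat.le_findGreatest (by omega) h

lemma step_anti (d : ℕ) (g : Fin d → ℕ)
    (hstep : ∀ i : Fin d, ∀ h : i.val + 1 < d, g ⟨i.val + 1, h⟩ ≤ g i) :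
    ∀ m (hm : m < d) k (hk : k < d), k ≤ m → g ⟨m, hm⟩ ≤ g ⟨k, hk⟩ := by
  intro m
  induction m with
  | zero =>
    intro hm k hk hkm
    have : k = 0 := by omega
    subst this; exact le_refl _
  | succ m ihm =>
    intro hm k hk hkm
    rcases Nat.eq_or_lt_of_le hkm with h | h
    · subst h; exact le_refl _
    · have h1 : g ⟨m + 1, hm⟩ ≤ g ⟨m, by omega⟩ := hstep ⟨m, by omega⟩ hm
      exact le_trans h1 (ihm (by omega) k hk (by omega))

/-- Facts about the sorted parts list of a partition counted on the right side. -/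
lemma inv_facts (d n : ℕ) (p : Nat.Partition (n + d * (d + 1) / 2))
    (hcard : Multiset.card p.parts = d) (hdurf : durfeeTriangleSize p.parts = d) :
    (∀ k, k < d → d - k ≤ (p.parts.sort (· ≥ ·)).getD k 0) ∧
    (∀ k, k < d → (p.parts.sort (· ≥ ·)).getD k 0 - (d - k) ≤ n) ∧
    (∑ i : Fin d, ((p.parts.sort (· ≥ ·)).getD i.val 0 - (d - i.val)) = n) := by
  set l := p.parts.sort (· ≥ ·) with hl
  have hlen : l.length = d := by rw [hl, Multiset.length_sort, hcard]
  have hsort : l.Pairwise (· ≥ ·) := Multiset.pairwise_sort _ _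
  have hcoe : (↑l : Multiset ℕ) = p.parts := Multiset.sort_eq _ _
  have hfits : triangleFits p.parts d := (durfee_eq_iff _ d hcard).mp hdurf
  have hge : ∀ k, k < d → d - k ≤ l.getD k 0 := by
    intro k hkd
    apply get_ge_of_sorted l hsort k (by omega)
    have := hfits (k + 1) (by rw [Finset.mem_Icc]; omega)
    rw [← hcoe] at this
    have heq : d + 1 - (k + 1) = d - k := by omega
    rw [heq] at this
    exact this
  have hsuml : l.sum = n + d * (d + 1) / 2 := by
    have := p.parts_sum
    rw [← hcoe, Multiset.sum_coe] at this
    exact this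
  have hsum1 : ∑ i ∈ Finset.range d, l.getD i 0 = n + d * (d + 1) / 2 := by
    rw [← hsuml, aux_sum_getD, hlen]
  have hS : ∑ i : Fin d, (l.getD i.val 0 - (d - i.val)) = n := by
    rw [Fin.sum_univ_eq_sum_range (fun i => l.getD i 0 - (d - i))]
    rw [Finset.sum_tsub_distrib _ (fun i hi => hge i (by simpa using hi))]
    rw [hsum1, aux_gauss]
    omega
  refine ⟨hge, ?_, hS⟩
  intro k hkd
  rw [← hS]
  exact Finset.single_le_sum (f := fun i : Fin d => l.getD i.val 0 - (d - i.val))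
    (fun _ _ => Nat.zero_le _) (Finset.mem_univ (⟨k, hkd⟩ : Fin d))

theorem a_eq_partitions_with_durfee (d n : ℕ) (hd : 0 < d) :
    a d n = Finset.card
      ((Finset.univ : Finset (Nat.Partition (n + d * (d + 1) / 2))).filter fun p =>
        Multiset.card p.parts = d ∧ durfeeTriangleSize p.parts = d) := by
  unfold a
  refine Finset.card_bij'
    (fun t ht =>
      { parts := ↑(List.ofFn fun i : Fin d => (t i : ℕ) + (d - (i : ℕ)))
        parts_pos := ?_
        parts_sum := ?_ })
    (fun p hp => fun i : Fin d =>
      (⟨((p.parts.sort (· ≥ ·)).getD i.val 0 - (d - i.val)) % (n + 1),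
        Nat.mod_lt _ (Nat.succ_pos n)⟩ : Fin (n + 1)))
    ?_ ?_ ?_ ?_
  -- parts_pos
  · intro i hi
    rw [Multiset.mem_coe, List.mem_ofFn] at hi
    obtain ⟨j, rfl⟩ := hi
    have := j.isLt
    show 0 < (t j : ℕ) + (d - (j : ℕ))
    omega
  -- parts_sum
  · rw [Finset.mem_filter] at ht
    obtain ⟨-, hsum, -⟩ := ht
    rw [Multiset.sum_coe, List.sum_ofFn, Finset.sum_add_distrib, hsum,
      Fin.sum_univ_eq_sum_range (fun i => d - i), aux_gauss]
  -- forward membership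
  · intro t ht
    rw [Finset.mem_filter]
    refine ⟨Finset.mem_univ _, ?_, ?_⟩
    · simp
    · rw [durfee_eq_iff _ d (by simp)]
      exact triangleFits_ofFn d _ (fun i => Nat.le_add_left _ _)
  -- backward membership
  · intro p hp
    rw [Finset.mem_filter] at hp
    obtain ⟨-, hcard, hdurf⟩ := hp
    obtain ⟨hge, hle, hS⟩ := inv_facts d n p hcard hdurf
    set l := p.parts.sort (· ≥ ·) with hl
    have hlen : l.length = d := by rw [hl, Multiset.length_sort, hcard]
    have hsort : l.Pairwise (· ≥ ·) := Multiset.pairwise_sort _ _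
    have hmod : ∀ k, k < d → (l.getD k 0 - (d - k)) % (n + 1) = l.getD k 0 - (d - k) :=
      fun k hk => Nat.mod_eq_of_lt (by have := hle k hk; omega)
    rw [Finset.mem_filter]
    refine ⟨Finset.mem_univ _, ?_, ?_⟩
    · show (∑ i : Fin d, ((l.getD i.val 0 - (d - i.val)) % (n + 1))) = n
      rw [Finset.sum_congr rfl (fun i _ => hmod i.val i.isLt)]
      exact hS
    · intro i h
      show ((l.getD (i.val + 1) 0 - (d - (i.val + 1))) % (n + 1))
        ≤ ((l.getD i.val 0 - (d - i.val)) % (n + 1)) + 1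
      rw [hmod _ h, hmod _ (by omega)]
      have hsle : l.getD (i.val + 1) 0 ≤ l.getD i.val 0 := by
        rw [List.getD_eq_getElem _ _ (show i.val + 1 < l.length by omega),
          List.getD_eq_getElem _ _ (show i.val < l.length by omega)]
        have h1 : (⟨i.val, by omega⟩ : Fin l.length) < ⟨i.val + 1, by omega⟩ := by
          simp [Fin.lt_def]
        have := hsort.rel_get_of_lt h1
        simpa [List.get_eq_getElem] using this
      have h1 := hge i.val (by omega)
      have h2 := hge (i.val + 1) h
      omega
  -- left inverse
  · intro t ht
    rw [Finset.mem_filter] at ht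
    obtain ⟨-, hsum, hstep⟩ := ht
    set g : Fin d → ℕ := fun i => (t i : ℕ) + (d - (i : ℕ)) with hg
    have hanti : (List.ofFn g).Pairwise (· ≥ ·) := by
      rw [List.pairwise_ofFn]
      intro i j hij
      have := step_anti d g (fun i h => by
        have := hstep i h
        simp only [hg]
        have hi := i.isLt
        omega) j.val j.isLt i.val i.isLt (le_of_lt hij)
      simpa using this
    have hsort2 : ((↑(List.ofFn g) : Multiset ℕ).sort (· ≥ ·)) = List.ofFn g := by
      apply List.Perm.eq_of_pairwise' (Multiset.pairwise_sort _ _) hanti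
      rw [← Multiset.coe_eq_coe, Multiset.sort_eq]
    funext i
    apply Fin.ext
    show ((((↑(List.ofFn g) : Multiset ℕ).sort (· ≥ ·)).getD i.val 0 - (d - i.val)) % (n + 1))
      = (t i : ℕ)
    rw [hsort2, List.getD_eq_getElem _ _ (by simpa using i.isLt), List.getElem_ofFn]
    simp only [hg, Fin.eta]
    have : (t i : ℕ) + (d - (i : ℕ)) - (d - (i : ℕ)) = (t i : ℕ) := by omega
    rw [this, Nat.mod_eq_of_lt (t i).isLt]
  -- right inverse
  · intro p hp
    rw [Finset.mem_filter] at hp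
    obtain ⟨-, hcard, hdurf⟩ := hp
    obtain ⟨hge, hle, -⟩ := inv_facts d n p hcard hdurf
    set l := p.parts.sort (· ≥ ·) with hl
    have hlen : l.length = d := by rw [hl, Multiset.length_sort, hcard]
    have hcoe : (↑l : Multiset ℕ) = p.parts := Multiset.sort_eq _ _
    apply Nat.Partition.ext
    show (↑(List.ofFn fun i : Fin d =>
        ((l.getD i.val 0 - (d - i.val)) % (n + 1)) + (d - (i : ℕ))) : Multiset ℕ) = p.parts
    rw [← hcoe]
    congr 1
    apply List.ext_getElem (by simp [hlen])
    intro k h1 h2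
    rw [List.getElem_ofFn]
    have hkd : k < d := by simpa using h1
    show ((l.getD k 0 - (d - k)) % (n + 1)) + (d - k) = l[k]
    rw [Nat.mod_eq_of_lt (by have := hle k hkd; omega), ← List.getD_eq_getElem l 0 h2]
    have := hge k hkd
    omega
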